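/- Let R be a commutative ring, p a prime invertible in R, and u ∈ R*. In the R-algebra S = R[T]/(T^p − u), the class α of T is invertible, 1, α, …, α^{p-1} is an R-module basis of S, and for a p-cyclic group G acting via g(α) = χ(g)α for a character χ : G → μ_p ⊆ R*, the χ-eigenspace S^χ = {s ∈ S : g(s) = χ(g)s for all g} is the free R-module generated by α. -/

import Mathlib

private lemma aux_eigen {R S G : Type} [CommRing R] [CommRing S] [Algebra R S] [Group G]
    (p : ℕ) (hp : p.Prime) (hG : Nat.card G = p)
    (χ : G →* Rˣ) (hχ : Function.Injective χ)
    (hprim : ∀ g : G, g ≠ 1 → IsUnit ((χ g : R) - 1))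
    (α : S) (b : Module.Basis (Fin p) R S) (hb : ∀ i : Fin p, b i = α ^ (i : ℕ))
    (ρ : G →* (S ≃ₐ[R] S)) (hρ : ∀ g : G, ρ g α = (χ g : R) • α) :
    {s : S | ∀ g : G, ρ g s = (χ g : R) • s} = {s : S | ∃ r : R, s = r • α} := by
  classical
  have h1p : (1 : ℕ) < p := hp.one_lt
  have hact : ∀ (g : G) (i : Fin p), ρ g (b i) = ((χ g : R) ^ (i : ℕ)) • b i := by
    intro g i
    rw [hb i, map_pow, hρ g, smul_pow, ← hb i]
  have hrepr : ∀ (g : G) (s : S) (j : Fin p),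
      b.repr (ρ g s) j = (χ g : R) ^ (j : ℕ) * b.repr s j := by
    intro g s j
    conv_lhs => rw [← b.sum_repr s]
    rw [map_sum]
    simp_rw [map_smul, hact, smul_smul]
    rw [b.repr_sum_self]
    exact mul_comm _ _
  ext s
  constructor
  · intro hs
    have hnt : Nontrivial G := by
      by_contra h
      rw [not_nontrivial_iff_subsingleton] at h
      have h1 : Nat.card G = 1 := Nat.card_eq_one_iff_unique.mpr ⟨h, ⟨1⟩⟩
      omega
    obtain ⟨g, hg⟩ := exists_ne (1 : G)
    have hordg : orderOf g = p := by
      have hdvd : orderOf g ∣ p := hG ▸ orderOf_dvd_natCard g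
      rcases hp.eq_one_or_self_of_dvd _ hdvd with h1 | h1
      · exact absurd (orderOf_eq_one_iff.mp h1) hg
      · exact h1
    have hzero : ∀ j : Fin p, j ≠ (⟨1, h1p⟩ : Fin p) → b.repr s j = 0 := by
      intro j hj
      have hjne : (j : ℕ) ≠ 1 := fun h => hj (Fin.ext h)
      have h2 : b.repr (ρ g s) j = (χ g : R) * b.repr s j := by
        rw [hs g, map_smul]; simp
      have hcoord : (χ g : R) ^ (j : ℕ) * b.repr s j = (χ g : R) * b.repr s j :=
        (hrepr g s j).symm.trans h2
      have hfac : ((χ g : R) ^ (j : ℕ) - (χ g : R)) * b.repr s j = 0 := by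
        rw [sub_mul, hcoord, sub_self]
      have hu : IsUnit ((χ g : R) ^ (j : ℕ) - (χ g : R)) := by
        rcases Nat.eq_zero_or_pos (j : ℕ) with h0 | hpos
        · rw [h0, pow_zero]
          simpa [neg_sub] using (hprim g hg).neg
        · have hk : (j : ℕ) - 1 ≠ 0 := by omega
          have hglt : g ^ ((j : ℕ) - 1) ≠ 1 := by
            intro hone
            have hdvd2 := orderOf_dvd_of_pow_eq_one hone
            rw [hordg] at hdvd2
            have := Nat.le_of_dvd (Nat.pos_of_ne_zero hk) hdvd2
            have := j.isLt
            omega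
          have hχpow : ((χ g : R) ^ ((j : ℕ) - 1)) - 1 = ((χ (g ^ ((j:ℕ)-1)) : R)) - 1 := by
            rw [map_pow]; push_cast; ring
          have hu1 : IsUnit ((χ g : R) ^ ((j : ℕ) - 1) - 1) := by
            rw [hχpow]; exact hprim _ hglt
          have hfactor : (χ g : R) ^ (j : ℕ) - (χ g : R)
              = (χ g : R) * ((χ g : R) ^ ((j : ℕ) - 1) - 1) := by
            have hsucc : (j : ℕ) - 1 + 1 = (j : ℕ) := by omega
            rw [mul_sub, mul_one, ← pow_succ', hsucc]
          rw [hfactor]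
          exact ((χ g).isUnit).mul hu1
      exact (hu.mul_right_eq_zero).mp hfac
    refine ⟨b.repr s ⟨1, h1p⟩, ?_⟩
    conv_lhs => rw [← b.sum_repr s]
    rw [Finset.sum_eq_single (⟨1, h1p⟩ : Fin p)]
    · rw [hb]; simp
    · intro j _ hj
      rw [hzero j hj, zero_smul]
    · intro h; exact absurd (Finset.mem_univ _) h
  · rintro ⟨r, rfl⟩ g
    rw [map_smul, hρ g, smul_comm]

/-- In `S = R[T]/(T^p − u)` with `p` prime invertible in `R` and `u ∈ Rˣ`, the class `α` of `T`
is invertible, the powers `1, α, …, α^{p-1}` form an `R`-module basis of `S`, and for a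
`p`-cyclic group `G` acting via a nontrivial character `χ : G → μ_p ⊆ Rˣ` by `g(α) = χ(g)α`,
the `χ`-eigenspace `S^χ` is the free `R`-module generated by `α`. -/
theorem stmt_12 (p : ℕ) (hp : p.Prime) (R : Type) [CommRing R] (hinv : IsUnit (p : R))
    (u : Rˣ) (G : Type) [Group G] (hG : Nat.card G = p)
    (χ : G →* Rˣ) (hχ : Function.Injective χ)
    (hroots : ∀ g : G, (χ g) ^ p = 1)
    (hprim : ∀ g : G, g ≠ 1 → IsUnit ((χ g : R) - 1))
    (ρ : G →* (AdjoinRoot (Polynomial.X ^ p - Polynomial.C (u : R)) ≃ₐ[R]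
          AdjoinRoot (Polynomial.X ^ p - Polynomial.C (u : R))))
    (hρ : ∀ g : G, ρ g (AdjoinRoot.root (Polynomial.X ^ p - Polynomial.C (u : R)))
          = (χ g : R) • AdjoinRoot.root (Polynomial.X ^ p - Polynomial.C (u : R))) :
    IsUnit (AdjoinRoot.root (Polynomial.X ^ p - Polynomial.C (u : R))) ∧
    (∃ b : Module.Basis (Fin p) R (AdjoinRoot (Polynomial.X ^ p - Polynomial.C (u : R))),
      ∀ i : Fin p, b i = AdjoinRoot.root (Polynomial.X ^ p - Polynomial.C (u : R)) ^ (i : ℕ)) ∧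
    {s : AdjoinRoot (Polynomial.X ^ p - Polynomial.C (u : R)) |
        ∀ g : G, ρ g s = (χ g : R) • s}
      = {s : AdjoinRoot (Polynomial.X ^ p - Polynomial.C (u : R)) |
        ∃ r : R, s = r • AdjoinRoot.root (Polynomial.X ^ p - Polynomial.C (u : R))} := by
  classical
  -- R is nontrivial, since otherwise G would be a subsingleton of card p ≥ 2
  have hntR : Nontrivial R := by
    by_contra h
    rw [not_nontrivial_iff_subsingleton] at h
    have : Subsingleton Rˣ := inferInstance
    have hG1 : Subsingleton G := ⟨fun a b => hχ (Subsingleton.elim _ _)⟩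
    have h1 : Nat.card G = 1 := Nat.card_eq_one_iff_unique.mpr ⟨hG1, ⟨1⟩⟩
    have := hp.one_lt
    omega
  have hfmonic : (Polynomial.X ^ p - Polynomial.C (u : R)).Monic :=
    Polynomial.monic_X_pow_sub_C _ hp.ne_zero
  have hdeg : (Polynomial.X ^ p - Polynomial.C (u : R)).natDegree = p :=
    Polynomial.natDegree_X_pow_sub_C
  -- α ^ p = u
  have hαp : AdjoinRoot.root (Polynomial.X ^ p - Polynomial.C (u : R)) ^ p
      = algebraMap R _ (u : R) := by
    have h0 := AdjoinRoot.eval₂_root (Polynomial.X ^ p - Polynomial.C (u : R))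
    simp only [Polynomial.eval₂_sub, Polynomial.eval₂_pow, Polynomial.eval₂_X,
      Polynomial.eval₂_C, sub_eq_zero] at h0
    exact h0
  -- α is a unit
  have hunit : IsUnit (AdjoinRoot.root (Polynomial.X ^ p - Polynomial.C (u : R))) := by
    have : IsUnit (AdjoinRoot.root (Polynomial.X ^ p - Polynomial.C (u : R)) ^ p) :=
      hαp ▸ (u.isUnit.map (algebraMap R _))
    exact (isUnit_pow_iff hp.ne_zero).mp this
  -- the power basis
  let pb : PowerBasis R (AdjoinRoot (Polynomial.X ^ p - Polynomial.C (u : R))) :=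
    AdjoinRoot.powerBasis' hfmonic
  let b : Module.Basis (Fin p) R (AdjoinRoot (Polynomial.X ^ p - Polynomial.C (u : R))) :=
    pb.basis.reindex (finCongr hdeg)
  have hb : ∀ i : Fin p,
      b i = AdjoinRoot.root (Polynomial.X ^ p - Polynomial.C (u : R)) ^ (i : ℕ) := by
    intro i
    simp only [b, Module.Basis.reindex_apply, PowerBasis.basis_eq_pow]
    congr 1
  exact ⟨hunit, ⟨b, hb⟩, aux_eigen p hp hG χ hχ hprim _ b hb ρ hρ⟩
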